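/- Let φ_1, φ_2 : [0,1] → [0,1] be defined by φ_1(x) = 1 − x and φ_2(x) = 3/2^{n+1} − x for x ∈ (1/2^{n+1}, 1/2^n). Then the composition φ_2 ∘ φ_1 is ergodic with respect to Lebesgue measure on [0,1]. -/

import Mathlib

open MeasureTheory Set Filter Topology Metric Pointwise
open scoped ENNReal NNReal

namespace OdoAux

noncomputable def μ : Measure ℝ := volume.restrict (Set.Icc (0:ℝ) 1)

def J (n : ℕ) : Set ℝ := Set.Ioo (1 - 1/2^n) (1 - 1/2^(n+1))

def G : Set ℝ := ⋃ n, J n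

lemma measurableSet_J (n : ℕ) : MeasurableSet (J n) := measurableSet_Ioo

lemma measurableSet_G : MeasurableSet G := MeasurableSet.iUnion measurableSet_J

lemma ae_mem_G : ∀ᵐ x ∂μ, x ∈ G := by
  have hsub : Icc (0:ℝ) 1 \ G ⊆ Set.range (fun n : ℕ => 1 - 1/2^n) ∪ {1} := by
    rintro x ⟨⟨hx0, hx1⟩, hxG⟩
    rcases eq_or_lt_of_le hx1 with h1 | h1
    · exact Or.inr h1
    by_contra hmem
    have hrange : ∀ n : ℕ, x ≠ 1 - 1/2^n := by
      intro n h
      exact hmem (Or.inl ⟨n, h.symm⟩)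
    -- let t = 1 - x ∈ (0,1); find minimal n with 1/2^(n+1) < t
    set t : ℝ := 1 - x with ht
    have ht0 : 0 < t := by simp [ht]; linarith
    have ht1 : t ≤ 1 := by simp [ht]; linarith
    have hex : ∃ n : ℕ, (1/2 : ℝ)^(n+1) < t := by
      obtain ⟨n, hn⟩ := exists_pow_lt_of_lt_one ht0 (by norm_num : (1:ℝ)/2 < 1)
      exact ⟨n, lt_of_le_of_lt (by
        apply pow_le_pow_of_le_one (by norm_num) (by norm_num)
        omega) hn⟩
    classical
    set n := Nat.find hex with hn
    have h1' : (1/2 : ℝ)^(n+1) < t := Nat.find_spec hex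
    have h2' : t ≤ (1/2 : ℝ)^n := by
      rcases Nat.eq_zero_or_pos n with h | h
      · simpa [h] using ht1
      · have := Nat.find_min hex (m := n - 1) (by omega)
        push_neg at this
        have : t ≤ (1/2:ℝ)^(n-1+1) := this
        simpa [Nat.sub_add_cancel h] using this
    have hne : t ≠ (1/2:ℝ)^n := by
      intro habs
      apply hrange n
      have h : (1/2:ℝ)^n = 1/2^n := by rw [div_pow, one_pow]
      rw [ht] at habs; linarith
    have h2'' : t < (1/2:ℝ)^n := lt_of_le_of_ne h2' hne
    apply hxG
    refine Set.mem_iUnion.2 ⟨n, ?_, ?_⟩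
    · have : (1/2:ℝ)^n = 1/2^n := by rw [div_pow, one_pow]
      rw [ht] at h2''; linarith [h2'', this.symm.le]
    · have : (1/2:ℝ)^(n+1) = 1/2^(n+1) := by rw [div_pow, one_pow]
      rw [ht] at h1'; linarith [h1', this.symm.le]
  have hnull : μ Gᶜ = 0 := by
    rw [μ, Measure.restrict_apply (measurableSet_G.compl)]
    have hc : (Set.range (fun n : ℕ => 1 - 1/2^n) ∪ {(1:ℝ)}).Countable :=
      (Set.countable_range _).union (Set.countable_singleton 1)
    refine measure_mono_null ?_ (hc.measure_zero volume)
    intro x hx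
    exact hsub ⟨hx.2, hx.1⟩
  rw [ae_iff]
  exact hnull


section Tlemmas

variable {T : ℝ → ℝ}
variable (hT : ∀ (n : ℕ) x, x ∈ J n → T x = x - 1 + 3/2^(n+1))

include hT

lemma T_mem_Ioo {n : ℕ} {x : ℝ} (hx : x ∈ J n) :
    T x ∈ Set.Ioo ((1:ℝ)/2^(n+1)) (1/2^n) := by
  obtain ⟨h1, h2⟩ := hx
  rw [hT n x ⟨h1, h2⟩]
  have p : (0:ℝ) < 2^n := by positivity
  have p' : (0:ℝ) < 2^(n+1) := by positivity
  have key : (1:ℝ)/2^n = 2*(1/2^(n+1)) := by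
    rw [pow_succ]; field_simp
  have e3 : (3:ℝ)/2^(n+1) = 3*(1/2^(n+1)) := by ring
  constructor <;> linarith

lemma T_J0 {x : ℝ} (hx : x ∈ J 0) : T x = x + 1/2 := by
  rw [hT 0 x hx]
  have : (2:ℝ)^(0+1) = 2 := by norm_num
  rw [this]; ring

omit hT in
lemma J_zero : J 0 = Set.Ioo (0:ℝ) (1/2) := by
  unfold J; norm_num

lemma T_lt_half {n : ℕ} (hn : 1 ≤ n) {x : ℝ} (hx : x ∈ J n) : T x < 1/2 := by
  have h := (T_mem_Ioo hT hx).2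
  have : (1:ℝ)/2^n ≤ 1/2 := by
    apply div_le_div_of_nonneg_left (by norm_num) (by norm_num)
    calc (2:ℝ) = 2^1 := by norm_num
    _ ≤ 2^n := by apply pow_le_pow_right₀ (by norm_num) hn
  linarith

lemma J_lb {n : ℕ} (hn : 1 ≤ n) {x : ℝ} (hx : x ∈ J n) : 1/2 ≤ x := by
  have h := hx.1
  have : (1:ℝ)/2^n ≤ 1/2 := by
    apply div_le_div_of_nonneg_left (by norm_num) (by norm_num)
    calc (2:ℝ) = 2^1 := by norm_num
    _ ≤ 2^n := by apply pow_le_pow_right₀ (by norm_num) hn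
  linarith

omit hT in
lemma J_sub_Ioo (n : ℕ) : J n ⊆ Set.Ioo (0:ℝ) 1 := by
  intro x hx
  obtain ⟨h1, h2⟩ := hx
  have p : (0:ℝ) < 2^n := by positivity
  have p' : (0:ℝ) < 2^(n+1) := by positivity
  have : (1:ℝ)/2^n ≤ 1 := by
    rw [div_le_one p]
    exact one_le_pow₀ (by norm_num : (1:ℝ) ≤ 2)
  constructor
  · linarith
  · have : (0:ℝ) < 1/2^(n+1) := by positivity
    linarith

-- conjugation: for x ∈ J n, T x / 2 = T (T (x/2))
lemma conj_eq {n : ℕ} {x : ℝ} (hx : x ∈ J n) : T x / 2 = T (T (x/2)) := by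
  obtain ⟨h1, h2⟩ := hx
  have p : (0:ℝ) < 2^n := by positivity
  have p' : (0:ℝ) < 2^(n+1) := by positivity
  have hx01 := J_sub_Ioo n ⟨h1, h2⟩
  have hhalf : x/2 ∈ J 0 := by
    rw [J_zero]
    constructor <;> [linarith [hx01.1]; linarith [hx01.2]]
  have hTh : T (x/2) = x/2 + 1/2 := T_J0 hT hhalf
  have hmem : T (x/2) ∈ J (n+1) := by
    rw [hTh]
    constructor
    · have : (1:ℝ)/2^(n+1) = (1/2^n)/2 := by
        rw [pow_succ]; field_simp
      rw [this]; linarith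
    · have : (1:ℝ)/2^(n+2) = (1/2^(n+1))/2 := by
        rw [pow_succ (n := n+1)]; field_simp
      rw [this]; linarith
  rw [hT (n+1) _ hmem, hTh, hT n x ⟨h1, h2⟩]
  have e : (2:ℝ)^(n+2) = 2 * 2^(n+1) := by ring
  field_simp
  ring

end Tlemmas


lemma J_gt_half {n : ℕ} (hn : 1 ≤ n) {x : ℝ} (hx : x ∈ J n) : 1/2 < x := by
  have h := hx.1
  have : (1:ℝ)/2^n ≤ 1/2 := by
    apply div_le_div_of_nonneg_left (by norm_num) (by norm_num)
    calc (2:ℝ) = 2^1 := by norm_num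
    _ ≤ 2^n := by apply pow_le_pow_right₀ (by norm_num) hn
  linarith

lemma G_sub_halves : G ⊆ Set.Ioo (0:ℝ) (1/2) ∪ Set.Ioo (1/2) 1 := by
  intro x hx
  obtain ⟨n, hn⟩ := Set.mem_iUnion.1 hx
  rcases Nat.eq_zero_or_pos n with h | h
  · subst h; rw [J_zero] at hn; exact Or.inl hn
  · exact Or.inr ⟨J_gt_half h hn, (J_sub_Ioo n hn).2⟩

section MeasureLemmas

variable {T : ℝ → ℝ}
variable (hT : ∀ (n : ℕ) x, x ∈ J n → T x = x - 1 + 3/2^(n+1))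
variable (hTmp : MeasurePreserving T μ μ)

omit hT hTmp in
lemma μ_eq_volume {X : Set ℝ} (hX : X ⊆ Set.Icc 0 1) : μ X = volume X := by
  rw [μ, Measure.restrict_apply' measurableSet_Icc, Set.inter_eq_self_of_subset_left hX]

omit hT hTmp in
lemma μ_ne_top (X : Set ℝ) : μ X ≠ ⊤ := by
  apply ne_of_lt
  calc μ X ≤ μ Set.univ := measure_mono (Set.subset_univ _)
  _ = volume (Set.Icc (0:ℝ) 1) := by rw [μ, Measure.restrict_apply_univ]
  _ = 1 := by rw [Real.volume_Icc]; norm_num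
  _ < ⊤ := ENNReal.one_lt_top

omit hT hTmp in
lemma noAtoms_μ : NoAtoms μ := by
  constructor
  intro x
  rw [μ, Measure.restrict_apply' measurableSet_Icc]
  exact measure_mono_null Set.inter_subset_left (measure_singleton x)

omit hT hTmp in
lemma μ_univ : μ Set.univ = 1 := by
  rw [μ, Measure.restrict_apply_univ, Real.volume_Icc]; norm_num

omit hT in
include hTmp in
lemma transfer {s : Set ℝ} (hs : MeasurableSet s) (hsi : T⁻¹' s =ᵐ[μ] s)
    {B : Set ℝ} (hB : MeasurableSet B) : μ (s ∩ T⁻¹' B) = μ (s ∩ B) := by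
  have h1 : μ (T⁻¹' (s ∩ B)) = μ (s ∩ B) :=
    hTmp.measure_preimage (hs.inter hB).nullMeasurableSet
  rw [Set.preimage_inter] at h1
  have h2 : ((T⁻¹' s ∩ T⁻¹' B : Set ℝ) : Set ℝ) =ᵐ[μ] ((s ∩ T⁻¹' B : Set ℝ) : Set ℝ) :=
    Filter.EventuallyEq.inter hsi (Filter.EventuallyEq.refl _ _)
  rw [← measure_congr h2, h1]

omit hTmp in
include hT in
lemma lemC : T⁻¹' (Set.Ioo (1/2:ℝ) 1) =ᵐ[μ] Set.Ioo (0:ℝ) (1/2) := by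
  rw [Filter.eventuallyEq_set]
  filter_upwards [ae_mem_G] with x hx
  obtain ⟨n, hn⟩ := Set.mem_iUnion.1 hx
  rcases Nat.eq_zero_or_pos n with h | h
  · subst h
    rw [J_zero] at hn
    apply iff_of_true
    · rw [Set.mem_preimage, T_J0 hT (J_zero ▸ hn)]
      exact ⟨by linarith [hn.1], by linarith [hn.2]⟩
    · exact hn
  · apply iff_of_false
    · rw [Set.mem_preimage]
      intro hmem
      exact absurd hmem.1 (not_lt.2 (T_lt_half hT h hn).le)
    · intro hmem
      exact absurd hmem.2 (not_lt.2 (J_gt_half h hn).le)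

omit hTmp in
include hT in
lemma lemD {a b : ℝ} (ha : 1/2 ≤ a) (hb : b ≤ 1) :
    T⁻¹' (Set.Icc a b) =ᵐ[μ] (fun x => x + 1/2)⁻¹' (Set.Icc a b) := by
  rw [Filter.eventuallyEq_set]
  filter_upwards [ae_mem_G] with x hx
  obtain ⟨n, hn⟩ := Set.mem_iUnion.1 hx
  rcases Nat.eq_zero_or_pos n with h | h
  · subst h
    rw [Set.mem_preimage, Set.mem_preimage, T_J0 hT hn]
  · apply iff_of_false
    · rw [Set.mem_preimage]
      intro hmem
      have := T_lt_half hT h hn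
      have := hmem.1
      linarith
    · rw [Set.mem_preimage]
      intro hmem
      have := J_gt_half h hn
      have := hmem.2
      linarith

omit hTmp in
include hT in
lemma union_halves_ae : ∀ᵐ x ∂μ, x ∈ Set.Ioo (0:ℝ) (1/2) ∪ Set.Ioo (1/2) 1 := by
  filter_upwards [ae_mem_G] with x hx using G_sub_halves hx

include hT hTmp in
lemma halves {s : Set ℝ} (hs : MeasurableSet s) (hsi : T⁻¹' s =ᵐ[μ] s) :
    2 * μ (s ∩ Set.Icc 0 (1/2)) = μ s := by
  have step1 : μ (s ∩ Set.Ioo (1/2:ℝ) 1) = μ (s ∩ Set.Ioo (0:ℝ) (1/2)) := by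
    rw [← transfer hTmp hs hsi measurableSet_Ioo]
    exact measure_congr ((Filter.EventuallyEq.refl _ s).inter (lemC hT))
  have step2 : μ s = μ (s ∩ Set.Ioo (0:ℝ) (1/2)) + μ (s ∩ Set.Ioo (1/2) 1) := by
    have h1 : s =ᵐ[μ] ((s ∩ (Set.Ioo (0:ℝ) (1/2) ∪ Set.Ioo (1/2) 1) : Set ℝ) : Set ℝ) := by
      rw [Filter.eventuallyEq_set]
      filter_upwards [union_halves_ae hT] with x hx
      exact ⟨fun h => ⟨h, hx⟩, fun h => h.1⟩
    rw [measure_congr h1, Set.inter_union_distrib_left]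
    apply measure_union
    · exact Set.disjoint_of_subset_right (Set.inter_subset_right)
        (Set.disjoint_of_subset_left (Set.inter_subset_right) (by
          rw [Set.disjoint_left]
          rintro y ⟨-, h1⟩ ⟨h2, -⟩
          linarith))
    · exact hs.inter measurableSet_Ioo
  haveI : NoAtoms μ := noAtoms_μ
  haveI : NullSingletonClass μ := Measure.restrict.instNullSingletonClass _
  have hIcc : μ (s ∩ Set.Icc (0:ℝ) (1/2)) = μ (s ∩ Set.Ioo (0:ℝ) (1/2)) := by
    refine measure_congr (Filter.EventuallyEq.inter (Filter.EventuallyEq.refl _ _) ?_)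
    exact (Ioo_ae_eq_Icc (μ := μ)).symm
  rw [hIcc, two_mul, step2, step1]


omit hT hTmp in
lemma vol_half_preimage (A : Set ℝ) :
    volume ((fun y : ℝ => y/2)⁻¹' A) = 2 * volume A := by
  have h : (fun y : ℝ => y/2)⁻¹' A = (2:ℝ) • A := by
    ext y
    simp only [Set.mem_preimage, Set.mem_smul_set, smul_eq_mul]
    constructor
    · intro h; exact ⟨y/2, h, by ring⟩
    · rintro ⟨a, ha, rfl⟩
      simpa using ha
  rw [h, Measure.addHaar_smul]
  norm_num

include hT hTmp in
lemma inv_half {s : Set ℝ} (hs : MeasurableSet s) (hsi : T⁻¹' s =ᵐ[μ] s) :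
    T⁻¹' ((fun y : ℝ => y/2)⁻¹' s) =ᵐ[μ] (fun y : ℝ => y/2)⁻¹' s := by
  have h2inv : T⁻¹' (T⁻¹' s) =ᵐ[μ] s :=
    (hTmp.quasiMeasurePreserving.preimage_ae_eq hsi).trans hsi
  set W : Set ℝ := {x | ¬ (x ∈ T⁻¹' (T⁻¹' s) ↔ x ∈ s)} with hW
  have hWnull : μ W = 0 := by
    have := Filter.eventuallyEq_set.1 h2inv
    rw [ae_iff] at this
    exact this
  have hpull : μ {x : ℝ | x/2 ∈ W} = 0 := by
    rw [μ, Measure.restrict_apply' measurableSet_Icc]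
    have hsub2 : {x : ℝ | x/2 ∈ W} ∩ Set.Icc 0 1 ⊆ (fun y : ℝ => y/2)⁻¹' (W ∩ Set.Icc 0 1) := by
      rintro x ⟨hx1, hx2, hx3⟩
      exact ⟨hx1, by constructor <;> [linarith; linarith]⟩
    apply measure_mono_null hsub2
    rw [vol_half_preimage]
    have hz : volume (W ∩ Set.Icc (0:ℝ) 1) = 0 := by
      rw [← Measure.restrict_apply' measurableSet_Icc]
      exact hWnull
    rw [hz, mul_zero]
  rw [Filter.eventuallyEq_set]
  have hpull' : ∀ᵐ x ∂μ, ¬ (x/2 ∈ W) := by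
    rw [ae_iff]
    simpa using hpull
  filter_upwards [ae_mem_G, hpull'] with x hxG hxW
  obtain ⟨n, hn⟩ := Set.mem_iUnion.1 hxG
  simp only [Set.mem_preimage]
  rw [conj_eq hT hn]
  rw [hW, Set.mem_setOf_eq, not_not] at hxW
  exact hxW

include hT hTmp in
lemma key (k : ℕ) : ∀ s : Set ℝ, MeasurableSet s → T⁻¹' s =ᵐ[μ] s →
    ∀ j : ℕ, j < 2^k →
      2^k * μ (s ∩ Set.Icc ((j:ℝ)/2^k) (((j:ℝ)+1)/2^k)) = μ s := by
  induction k with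
  | zero =>
    intro s hs hsi j hj
    interval_cases j
    have hmem : ∀ᵐ x ∂μ, x ∈ Set.Icc (0:ℝ) 1 := by
      rw [μ]; exact ae_restrict_mem measurableSet_Icc
    have h1 : μ (s ∩ Set.Icc (0:ℝ) 1) = μ s := by
      refine measure_congr ?_
      rw [Filter.eventuallyEq_set]
      filter_upwards [hmem] with x hx
      exact ⟨fun h => h.1, fun h => ⟨h, hx⟩⟩
    simpa using h1
  | succ k ih =>
    intro s hs hsi j hj
    have hp : (0:ℝ) < 2^k := by positivity
    have hp' : (0:ℝ) < 2^(k+1) := by positivity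
    have hps : (2:ℝ)^(k+1) = 2^k * 2 := pow_succ 2 k
    -- left half case
    have hleft : ∀ j' : ℕ, j' < 2^k →
        2^(k+1) * μ (s ∩ Set.Icc ((j':ℝ)/2^(k+1)) (((j':ℝ)+1)/2^(k+1))) = μ s := by
      intro j' hj'
      have hjr : ((j':ℝ)+1) ≤ 2^k := by
        have : (j'+1 : ℕ) ≤ 2^k := hj'
        calc ((j':ℝ)+1) = ((j'+1 : ℕ) : ℝ) := by push_cast; ring
        _ ≤ ((2^k : ℕ) : ℝ) := Nat.cast_le.2 this
        _ = 2^k := by push_cast; ring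
      set s₂ : Set ℝ := (fun y : ℝ => y/2)⁻¹' s with hs₂def
      have hs₂ : MeasurableSet s₂ := hs.preimage (measurable_id.div_const 2)
      have hsi₂ := inv_half hT hTmp hs hsi
      have hIH := ih s₂ hs₂ hsi₂ j' hj'
      -- μ s₂ = μ s
      have hμs₂ : μ s₂ = μ s := by
        have e1 : s₂ ∩ Set.Icc (0:ℝ) 1 = (fun y : ℝ => y/2)⁻¹' (s ∩ Set.Icc 0 (1/2)) := by
          ext x
          simp only [hs₂def, Set.mem_inter_iff, Set.mem_preimage, Set.mem_Icc]
          constructor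
          · rintro ⟨h1, h2, h3⟩; exact ⟨h1, by linarith, by linarith⟩
          · rintro ⟨h1, h2, h3⟩; exact ⟨h1, by linarith, by linarith⟩
        calc μ s₂ = volume (s₂ ∩ Set.Icc (0:ℝ) 1) := by
              rw [μ, Measure.restrict_apply' measurableSet_Icc]
        _ = volume ((fun y : ℝ => y/2)⁻¹' (s ∩ Set.Icc 0 (1/2))) := by rw [e1]
        _ = 2 * volume (s ∩ Set.Icc 0 (1/2)) := vol_half_preimage _
        _ = 2 * μ (s ∩ Set.Icc 0 (1/2)) := by
              rw [μ_eq_volume (fun x hx => ⟨hx.2.1, by linarith [hx.2.2]⟩)]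
        _ = μ s := halves hT hTmp hs hsi
      -- set identification
      have e2 : s₂ ∩ Set.Icc ((j':ℝ)/2^k) (((j':ℝ)+1)/2^k)
          = (fun y : ℝ => y/2)⁻¹' (s ∩ Set.Icc ((j':ℝ)/2^(k+1)) (((j':ℝ)+1)/2^(k+1))) := by
        ext x
        simp only [hs₂def, Set.mem_inter_iff, Set.mem_preimage, Set.mem_Icc]
        have d1 : ((j':ℝ))/2^(k+1) = ((j':ℝ)/2^k)/2 := by rw [hps]; field_simp
        have d2 : ((j':ℝ)+1)/2^(k+1) = (((j':ℝ)+1)/2^k)/2 := by rw [hps]; field_simp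
        rw [d1, d2]
        constructor
        · rintro ⟨h1, h2, h3⟩; exact ⟨h1, by linarith, by linarith⟩
        · rintro ⟨h1, h2, h3⟩; exact ⟨h1, by linarith, by linarith⟩
      have hsubD : Set.Icc ((j':ℝ)/2^(k+1)) (((j':ℝ)+1)/2^(k+1)) ⊆ Set.Icc (0:ℝ) 1 := by
        intro x hx
        have h2 : ((j':ℝ)+1)/2^(k+1) ≤ 1 := by
          rw [div_le_one hp']
          calc ((j':ℝ)+1) ≤ 2^k := hjr
          _ ≤ 2^(k+1) := by rw [hps]; nlinarith
        have h0 : (0:ℝ) ≤ (j':ℝ)/2^(k+1) := by positivity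
        exact ⟨by linarith [hx.1], by linarith [hx.2]⟩
      have hsubDk : Set.Icc ((j':ℝ)/2^k) (((j':ℝ)+1)/2^k) ⊆ Set.Icc (0:ℝ) 1 := by
        intro x hx
        have h2 : ((j':ℝ)+1)/2^k ≤ 1 := by rw [div_le_one hp]; exact hjr
        have h0 : (0:ℝ) ≤ (j':ℝ)/2^k := by positivity
        exact ⟨by linarith [hx.1], by linarith [hx.2]⟩
      have e3 : μ (s₂ ∩ Set.Icc ((j':ℝ)/2^k) (((j':ℝ)+1)/2^k))
          = 2 * μ (s ∩ Set.Icc ((j':ℝ)/2^(k+1)) (((j':ℝ)+1)/2^(k+1))) := by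
        rw [μ_eq_volume (fun x hx => hsubDk hx.2), e2, vol_half_preimage,
          μ_eq_volume (fun x hx => hsubD hx.2)]
      rw [hμs₂, e3] at hIH
      rw [← hIH, hps]
      ring
    rcases lt_or_ge j (2^k) with hcase | hcase
    · exact hleft j hcase
    · -- right half
      set j' := j - 2^k with hj'def
      have hj'lt : j' < 2^k := by omega
      have hcast : (j':ℝ) = (j:ℝ) - 2^k := by
        rw [hj'def]
        push_cast [Nat.cast_sub hcase]
        ring
      have hjlow : (2:ℝ)^k ≤ (j:ℝ) := by
        calc (2:ℝ)^k = ((2^k : ℕ) : ℝ) := by push_cast; ring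
        _ ≤ (j:ℝ) := Nat.cast_le.2 hcase
      have hjhigh : ((j:ℝ)+1) ≤ 2^(k+1) := by
        have : (j+1 : ℕ) ≤ 2^(k+1) := hj
        calc ((j:ℝ)+1) = ((j+1 : ℕ) : ℝ) := by push_cast; ring
        _ ≤ ((2^(k+1) : ℕ) : ℝ) := Nat.cast_le.2 this
        _ = 2^(k+1) := by push_cast; ring
      have ha : (1:ℝ)/2 ≤ (j:ℝ)/2^(k+1) := by
        rw [div_le_div_iff₀ (by norm_num) hp']
        rw [hps]; nlinarith
      have hb : ((j:ℝ)+1)/2^(k+1) ≤ 1 := by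
        rw [div_le_one hp']; exact hjhigh
      have htrans := transfer hTmp hs hsi (B := Set.Icc ((j:ℝ)/2^(k+1)) (((j:ℝ)+1)/2^(k+1)))
        measurableSet_Icc
      have hcong : μ (s ∩ T⁻¹' (Set.Icc ((j:ℝ)/2^(k+1)) (((j:ℝ)+1)/2^(k+1))))
          = μ (s ∩ (fun x : ℝ => x + 1/2)⁻¹' (Set.Icc ((j:ℝ)/2^(k+1)) (((j:ℝ)+1)/2^(k+1)))) := by
        refine measure_congr (Filter.EventuallyEq.inter (Filter.EventuallyEq.refl _ _) ?_)
        exact lemD hT ha hb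
      have hshift : (fun x : ℝ => x + 1/2)⁻¹' (Set.Icc ((j:ℝ)/2^(k+1)) (((j:ℝ)+1)/2^(k+1)))
          = Set.Icc ((j':ℝ)/2^(k+1)) (((j':ℝ)+1)/2^(k+1)) := by
        have d1 : (j:ℝ)/2^(k+1) = (j':ℝ)/2^(k+1) + 1/2 := by
          rw [hcast, hps]; field_simp; ring
        have d2 : ((j:ℝ)+1)/2^(k+1) = ((j':ℝ)+1)/2^(k+1) + 1/2 := by
          rw [hcast, hps]; field_simp; ring
        ext x
        simp only [Set.mem_preimage, Set.mem_Icc]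
        constructor
        · rintro ⟨u, v⟩; exact ⟨by linarith, by linarith⟩
        · rintro ⟨u, v⟩; exact ⟨by linarith, by linarith⟩
      rw [← htrans, hcong, hshift]
      exact hleft j' hj'lt


omit hT hTmp in
lemma dyadic_sub_Icc {k j : ℕ} (hj : j < 2^k) :
    Set.Icc ((j:ℝ)/2^k) (((j:ℝ)+1)/2^k) ⊆ Set.Icc (0:ℝ) 1 := by
  have hp : (0:ℝ) < 2^k := by positivity
  have hjr : ((j:ℝ)+1) ≤ 2^k := by
    have h : (j+1 : ℕ) ≤ 2^k := hj
    calc ((j:ℝ)+1) = ((j+1 : ℕ) : ℝ) := by push_cast; ring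
    _ ≤ ((2^k : ℕ) : ℝ) := Nat.cast_le.2 h
    _ = 2^k := by push_cast; ring
  intro x hx
  have h0 : (0:ℝ) ≤ (j:ℝ)/2^k := by positivity
  have h1 : ((j:ℝ)+1)/2^k ≤ 1 := by rw [div_le_one hp]; exact hjr
  exact ⟨by linarith [hx.1], by linarith [hx.2]⟩

omit hT hTmp in
lemma exists_dyadic {x : ℝ} (hx : x ∈ Set.Icc (0:ℝ) 1) (k : ℕ) :
    ∃ j : ℕ, j < 2^k ∧ x ∈ Set.Icc ((j:ℝ)/2^k) (((j:ℝ)+1)/2^k) := by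
  have hp : (0:ℝ) < 2^k := by positivity
  have hcast : ((2^k : ℕ) : ℝ) = 2^k := by push_cast; ring
  rcases eq_or_lt_of_le hx.2 with h1 | h1
  · refine ⟨2^k - 1, by have := Nat.one_le_two_pow (n := k); omega, ?_⟩
    have hone : 1 ≤ 2^k := Nat.one_le_two_pow
    have hc : ((2^k - 1 : ℕ) : ℝ) = 2^k - 1 := by
      push_cast [Nat.cast_sub hone]; ring
    rw [hc]
    constructor
    · rw [div_le_iff₀ hp]
      rw [← h1]; nlinarith
    · rw [le_div_iff₀ hp]
      rw [← h1]; nlinarith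
  · set j := ⌊x * 2^k⌋₊ with hj
    have hx0 : 0 ≤ x * 2^k := by nlinarith [hx.1]
    have hfl : (j:ℝ) ≤ x * 2^k := Nat.floor_le hx0
    have hlt : x * 2^k < (j:ℝ) + 1 := Nat.lt_floor_add_one _
    have hjlt : j < 2^k := by
      rw [hj]
      rw [Nat.floor_lt hx0, hcast]
      nlinarith
    refine ⟨j, hjlt, ?_⟩
    constructor
    · rw [div_le_iff₀ hp]; linarith
    · rw [le_div_iff₀ hp]; linarith

include hT hTmp in
lemma nullOrConull {s : Set ℝ} (hs : MeasurableSet s) (hsi : T⁻¹' s =ᵐ[μ] s) :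
    μ s = 0 ∨ μ sᶜ = 0 := by
  by_contra hcon
  push_neg at hcon
  obtain ⟨hs0, hsc0⟩ := hcon
  set a := μ s with ha
  have hsum : a + μ sᶜ = 1 := by
    rw [ha, measure_add_measure_compl hs, μ_univ]
  have hle1 : a ≤ 1 := by
    rw [← μ_univ]; exact measure_mono (Set.subset_univ _)
  have ha1 : a < 1 := by
    rcases lt_or_eq_of_le hle1 with h | h
    · exact h
    · exfalso
      rw [h] at hsum
      apply hsc0
      have h2 : (1:ℝ≥0∞) + μ sᶜ = 1 + 0 := by rw [add_zero]; exact hsum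
      exact (ENNReal.add_right_inj ENNReal.one_ne_top).1 h2
  set A := s ∩ Set.Icc (0:ℝ) 1 with hA
  have hAm : MeasurableSet A := hs.inter measurableSet_Icc
  have hvolA : volume A = a := by
    rw [ha, μ, Measure.restrict_apply' measurableSet_Icc, hA]
  have hres0 : volume.restrict A ≠ 0 := by
    rw [Ne, Measure.restrict_eq_zero, hvolA]
    exact hs0
  haveI : (ae (volume.restrict A)).NeBot := ae_neBot.2 hres0
  have hbes := Besicovitch.ae_tendsto_measure_inter_div (volume : Measure ℝ) A
  have hmem := ae_restrict_mem (μ := volume) hAm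
  obtain ⟨x, hxt, hxA⟩ := (hbes.and hmem).exists
  have hx01 : x ∈ Set.Icc (0:ℝ) 1 := hxA.2
  -- the ratio bound at scale 1/2^k
  have hq : ∀ k : ℕ, ENNReal.ofReal ((1:ℝ)/2^k) = ((2:ℝ≥0∞)^k)⁻¹ := by
    intro k
    rw [one_div, ENNReal.ofReal_inv_of_pos (by positivity)]
    congr 1
    rw [ENNReal.ofReal_pow (by norm_num)]
    norm_num
  have hqne0 : ∀ k : ℕ, ((2:ℝ≥0∞)^k)⁻¹ ≠ 0 := fun k =>
    ENNReal.inv_ne_zero.2 (ENNReal.pow_ne_top ENNReal.ofNat_ne_top)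
  have hqnetop : ∀ k : ℕ, ((2:ℝ≥0∞)^k)⁻¹ ≠ ⊤ := fun k =>
    ENNReal.inv_ne_top.2 (pow_ne_zero _ (by norm_num))
  have hbound : ∀ k : ℕ,
      volume (A ∩ closedBall x ((1:ℝ)/2^k)) / volume (closedBall x ((1:ℝ)/2^k))
        ≤ (1+a)/2 := by
    intro k
    obtain ⟨j, hjk, hxD⟩ := exists_dyadic hx01 k
    set D := Set.Icc ((j:ℝ)/2^k) (((j:ℝ)+1)/2^k) with hD
    have hp : (0:ℝ) < 2^k := by positivity
    set q : ℝ≥0∞ := ((2:ℝ≥0∞)^k)⁻¹ with hqdef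
    have hDball : D ⊆ closedBall x ((1:ℝ)/2^k) := by
      intro y hy
      rw [Metric.mem_closedBall, Real.dist_eq, abs_le]
      have e : ((j:ℝ)+1)/2^k - (j:ℝ)/2^k = 1/2^k := by field_simp; ring
      constructor <;> linarith [hy.1, hy.2, hxD.1, hxD.2]
    have hvolD : volume D = q := by
      rw [hD, Real.volume_Icc]
      have e : ((j:ℝ)+1)/2^k - (j:ℝ)/2^k = 1/2^k := by field_simp; ring
      rw [e, hq k]
    have hvolB : volume (closedBall x ((1:ℝ)/2^k)) = 2 * q := by
      rw [Real.volume_closedBall]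
      rw [two_mul, ENNReal.ofReal_add (by positivity) (by positivity), hq k, two_mul]
    -- measure of s on D
    have hAD : A ∩ D = s ∩ D := by
      rw [hA, Set.inter_assoc]
      congr 1
      rw [Set.inter_eq_self_of_subset_right (dyadic_sub_Icc hjk)]
    have hkey := key hT hTmp k s hs hsi j hjk
    have hADq : volume (A ∩ D) = a * q := by
      have hμ : μ (s ∩ D) = volume (A ∩ D) := by
        rw [hAD, μ_eq_volume (fun y hy => dyadic_sub_Icc hjk hy.2)]
      rw [hμ] at hkey
      rw [ha, ← hkey, hqdef]
      rw [mul_comm ((2:ℝ≥0∞)^k) _, mul_assoc,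
        ENNReal.mul_inv_cancel (pow_ne_zero _ (by norm_num)) (ENNReal.pow_ne_top ENNReal.ofNat_ne_top),
        mul_one]
    -- disjointness bound
    have hdiff : volume (D \ A) = q - a * q := by
      have e : D \ A = D \ (D ∩ A) := by rw [Set.diff_self_inter]
      rw [e, measure_diff Set.inter_subset_left
        ((measurableSet_Icc.inter hAm).nullMeasurableSet)
        (by
          apply ne_of_lt
          calc volume (D ∩ A) ≤ volume D := measure_mono Set.inter_subset_left
          _ = q := hvolD
          _ < ⊤ := (hqnetop k).lt_top),
        hvolD, Set.inter_comm, hADq]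
    have hdisj : volume (A ∩ closedBall x ((1:ℝ)/2^k)) + volume (D \ A)
        ≤ volume (closedBall x ((1:ℝ)/2^k)) := by
      rw [← measure_union (by
          rw [Set.disjoint_left]
          rintro y ⟨hy1, -⟩ ⟨-, hy2⟩
          exact hy2 hy1) (measurableSet_Icc.diff hAm)]
      apply measure_mono
      rintro y (⟨-, hy⟩ | ⟨hy, -⟩)
      · exact hy
      · exact hDball hy
    -- conclude ratio bound
    have haq : a * q ≤ q := by
      calc a * q ≤ 1 * q := by gcongr
      _ = q := one_mul q
    have hsubmul : q - a * q = (1 - a) * q := by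
      rw [ENNReal.sub_mul (fun _ _ => hqnetop k), one_mul]
    have h2q : (2:ℝ≥0∞) * q = (1+a) * q + (1-a) * q := by
      rw [← add_mul]
      congr 1
      rw [add_assoc, add_tsub_cancel_of_le hle1]
      norm_num
    have hm : volume (A ∩ closedBall x ((1:ℝ)/2^k)) ≤ (1+a) * q := by
      have h := hdisj
      rw [hdiff, hvolB, hsubmul, h2q] at h
      have hne : (1 - a) * q ≠ ⊤ :=
        ENNReal.mul_ne_top (ne_top_of_le_ne_top ENNReal.one_ne_top tsub_le_self) (hqnetop k)
      exact (ENNReal.add_le_add_iff_right hne).1 h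
    rw [hvolB, ENNReal.div_le_iff (by
        exact mul_ne_zero two_ne_zero (hqne0 k)) (by
        exact ENNReal.mul_ne_top ENNReal.ofNat_ne_top (hqnetop k))]
    calc volume (A ∩ closedBall x ((1:ℝ)/2^k)) ≤ (1+a) * q := hm
    _ = (1+a)/2 * (2*q) := by
        rw [← mul_assoc, ENNReal.div_mul_cancel (by norm_num) ENNReal.ofNat_ne_top]
  -- take the limit
  have hrk : Tendsto (fun k : ℕ => (1:ℝ)/2^k) atTop (nhdsWithin 0 (Set.Ioi 0)) := by
    apply tendsto_nhdsWithin_of_tendsto_nhds_of_eventually_within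
    · have h := tendsto_pow_atTop_nhds_zero_of_lt_one
        (by norm_num : (0:ℝ) ≤ 1/2) (by norm_num : (1/2:ℝ) < 1)
      convert h using 2 with k
      rw [div_pow, one_pow]
    · exact Filter.Eventually.of_forall (fun k => Set.mem_Ioi.2 (by positivity))
  have hcomp := hxt.comp hrk
  have hfin : (1:ℝ≥0∞) ≤ (1+a)/2 := le_of_tendsto' hcomp hbound
  have h2le : (2:ℝ≥0∞) ≤ 1 + a := by
    calc (2:ℝ≥0∞) = 2 * 1 := (mul_one 2).symm
    _ ≤ 2 * ((1+a)/2) := by gcongr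
    _ = 1 + a := ENNReal.mul_div_cancel (by norm_num) ENNReal.ofNat_ne_top
  have hlt : (1:ℝ≥0∞) + a < 2 := by
    calc (1:ℝ≥0∞) + a < 1 + 1 := ENNReal.add_lt_add_left ENNReal.one_ne_top ha1
    _ = 2 := by norm_num
  exact absurd h2le (not_le.2 hlt)

end MeasureLemmas

end OdoAux


/-- with `φ₁ x = 1 - x` on `[0,1]` and `φ₂ x = 3/2^(n+1) - x` on each dyadic
interval `(1/2^(n+1), 1/2^n)`, the composition `φ₂ ∘ φ₁` (the binary odometer) is ergodic
with respect to Lebesgue measure on `[0,1]`. -/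
theorem odometer_ergodic (φ₁ φ₂ : ℝ → ℝ)
    (h1 : ∀ x, φ₁ x = 1 - x)
    (h2 : ∀ n : ℕ, ∀ x ∈ Set.Ioo ((1 : ℝ) / 2 ^ (n + 1)) (1 / 2 ^ n),
      φ₂ x = 3 / 2 ^ (n + 1) - x)
    (hm : Measurable φ₂)
    (hmp : MeasurePreserving φ₂ (volume.restrict (Set.Icc (0 : ℝ) 1))
      (volume.restrict (Set.Icc (0 : ℝ) 1))) :
    Ergodic (φ₂ ∘ φ₁) (volume.restrict (Set.Icc (0 : ℝ) 1)) := by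
  have hμ : OdoAux.μ = volume.restrict (Set.Icc (0:ℝ) 1) := rfl
  have hpre : (fun x : ℝ => 1 - x)⁻¹' (Set.Icc (0:ℝ) 1) = Set.Icc 0 1 := by
    ext x
    simp only [Set.mem_preimage, Set.mem_Icc]
    constructor <;> rintro ⟨u, v⟩ <;> exact ⟨by linarith, by linarith⟩
  have hφ₁m : Measurable fun x : ℝ => 1 - x := measurable_const.sub measurable_id
  have hmp₁ : MeasurePreserving (fun x : ℝ => 1 - x)
      (volume.restrict (Set.Icc (0:ℝ) 1)) (volume.restrict (Set.Icc (0:ℝ) 1)) := by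
    refine ⟨hφ₁m, ?_⟩
    have hbase : Measure.map (fun x : ℝ => 1 - x) volume = volume :=
      (Measure.measurePreserving_sub_left volume 1).map_eq
    calc Measure.map (fun x:ℝ => 1-x) (volume.restrict (Set.Icc 0 1))
        = Measure.map (fun x:ℝ => 1-x)
            (volume.restrict ((fun x:ℝ => 1-x)⁻¹' (Set.Icc 0 1))) := by rw [hpre]
      _ = (Measure.map (fun x:ℝ => 1-x) volume).restrict (Set.Icc 0 1) :=
            (Measure.restrict_map hφ₁m measurableSet_Icc).symm
      _ = volume.restrict (Set.Icc 0 1) := by rw [hbase]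
  have hφ₁eq : φ₁ = fun x : ℝ => 1 - x := funext h1
  have hTmp : MeasurePreserving (φ₂ ∘ φ₁)
      (volume.restrict (Set.Icc (0:ℝ) 1)) (volume.restrict (Set.Icc (0:ℝ) 1)) := by
    rw [hφ₁eq]
    exact hmp.comp hmp₁
  have hTmp' : MeasurePreserving (φ₂ ∘ φ₁) OdoAux.μ OdoAux.μ := by
    rw [hμ]; exact hTmp
  have hT : ∀ (n : ℕ) x, x ∈ OdoAux.J n → (φ₂ ∘ φ₁) x = x - 1 + 3/2^(n+1) := by
    intro n x hx
    obtain ⟨hl, hr⟩ := hx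
    have hmem : (1 - x) ∈ Set.Ioo ((1:ℝ)/2^(n+1)) (1/2^n) := ⟨by linarith, by linarith⟩
    show φ₂ (φ₁ x) = _
    rw [h1 x, h2 n _ hmem]
    ring
  refine ⟨hTmp, ?_⟩
  constructor
  intro s hs hsinv
  have hsi : (φ₂ ∘ φ₁)⁻¹' s =ᵐ[OdoAux.μ] s := by rw [hsinv]; exact Filter.EventuallyEq.rfl
  rcases OdoAux.nullOrConull hT hTmp' hs hsi with h | h
  · rw [← hμ]
    exact Filter.eventuallyConst_set.2 (Or.inr (measure_eq_zero_iff_ae_notMem.1 h))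
  · rw [← hμ]
    refine Filter.eventuallyConst_set.2 (Or.inl ?_)
    have h' := measure_eq_zero_iff_ae_notMem.1 h
    filter_upwards [h'] with x hx
    simpa using hx
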